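/- Finite-graph DGG estimate: Let Ω be a finite set with measure m, symmetric weights μ, intrinsic pseudo metric ρ of jump size ≤ s > 0, Dirichlet Laplacian Δ_Ω with smallest eigenvalue λ₁. Then for any subsets A, B ⊆ Ω and functions f, g : Ω → ℝ supported in A and B respectively, |⟨e^{tΔ_Ω}f, g⟩_m| ≤ exp(−λ₁t − ζ_s(t, ρ(A,B)))·‖f‖_{ℓ²_m}·‖g‖_{ℓ²_m} for all t > 0, where ρ(A,B) = min_{a∈A, b∈B} ρ(a,b), ⟨f,g⟩_m = ∑_x m_x f(x)g(x), and ζ_s(t,r) = (1/s²)( rs·asinh(rs/t) − √(t²+r²s²) + t ). -/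

import Mathlib

noncomputable def zeta (s t r : ℝ) : ℝ :=
  (1 / s ^ 2) * (r * s * Real.arsinh (r * s / t) - Real.sqrt (t ^ 2 + r ^ 2 * s ^ 2) + t)



open Real in
lemma sinh_smul_le (lam X : ℝ) (h0 : 0 ≤ lam) (h1 : lam ≤ 1) (hX : 0 ≤ X) :
    Real.sinh (lam * X) ≤ lam * Real.sinh X := by
  set F : ℝ → ℝ := fun x => lam * Real.sinh x - Real.sinh (lam * x) with hF
  have hd : ∀ x : ℝ, HasDerivAt F (lam * Real.cosh x - Real.cosh (lam * x) * lam) x := by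
    intro x
    exact ((Real.hasDerivAt_sinh x).const_mul lam).sub
      ((Real.hasDerivAt_sinh (lam * x)).comp x (by simpa using (hasDerivAt_id x).const_mul lam))
  have hmono : MonotoneOn F (Set.Ici 0) := by
    apply monotoneOn_of_deriv_nonneg (convex_Ici 0)
    · exact fun x _ => ((hd x).differentiableAt.continuousAt).continuousWithinAt
    · exact fun x _ => (hd x).differentiableAt.differentiableWithinAt
    · intro x hx
      rw [(hd x).deriv]
      have : Real.cosh (lam * x) ≤ Real.cosh x := by
        rw [Real.cosh_le_cosh]
        rw [interior_Ici] at hx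
        have hx' : 0 < x := hx
        rw [abs_of_nonneg (by positivity), abs_of_nonneg hx'.le]
        nlinarith
      nlinarith
  have := hmono (Set.self_mem_Ici) (Set.mem_Ici.2 hX) hX
  simp only [hF, Real.sinh_zero, mul_zero, sub_zero] at this
  linarith

lemma cosh_ratio_le (α u s : ℝ) (hα : 0 ≤ α) (hu : 0 ≤ u) (hus : u ≤ s) (hs : 0 < s) :
    Real.cosh (α * u) - 1 ≤ u ^ 2 / s ^ 2 * (Real.cosh (α * s) - 1) := by
  have key : ∀ y : ℝ, Real.cosh y - 1 = 2 * Real.sinh (y / 2) ^ 2 := by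
    intro y
    have := Real.cosh_sq (y / 2)
    have h2 := Real.cosh_two_mul (y / 2)
    have h3 := Real.cosh_sq (y / 2)
    have hy : Real.cosh y = Real.cosh (2 * (y / 2)) := by rw [show 2 * (y / 2) = y by ring]
    linarith
  rw [key, key]
  have hsinh : Real.sinh (α * u / 2) ≤ u / s * Real.sinh (α * s / 2) := by
    have := sinh_smul_le (u / s) (α * s / 2) (by positivity) (by
      rw [div_le_one hs]; exact hus) (by positivity)
    rw [show u / s * (α * s / 2) = α * u / 2 by field_simp] at this
    exact this
  have h1 : 0 ≤ Real.sinh (α * u / 2) := Real.sinh_nonneg_iff.2 (by positivity)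
  have h2 : 0 ≤ u / s * Real.sinh (α * s / 2) := by positivity
  have := mul_self_le_mul_self h1 hsinh
  have hsq : Real.sinh (α * u / 2) ^ 2 ≤ (u / s) ^ 2 * Real.sinh (α * s / 2) ^ 2 := by
    nlinarith
  have : u ^ 2 / s ^ 2 * (2 * Real.sinh (α * s / 2) ^ 2) =
      2 * ((u / s) ^ 2 * Real.sinh (α * s / 2) ^ 2) := by ring
  rw [this]
  linarith

lemma form_bound {Ω : Type*} [Fintype Ω]
    (m : Ω → ℝ) (μ : Ω → Ω → ℝ) (hμ : ∀ x y, 0 ≤ μ x y) (hsym : ∀ x y, μ x y = μ y x)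
    (ρ : Ω → Ω → ℝ) (hρsym : ∀ x y, ρ x y = ρ y x) (hρnn : ∀ x y, 0 ≤ ρ x y)
    (hint : ∀ x, ∑ y, μ x y * ρ x y ^ 2 ≤ m x)
    (s : ℝ) (hs : 0 < s) (hjump : ∀ x y, 0 < μ x y → ρ x y ≤ s)
    (lam1 : ℝ)
    (hlam1 : ∀ w : Ω → ℝ, lam1 * ∑ x, m x * w x ^ 2
      ≤ (1 / 2) * ∑ x, ∑ y, μ x y * (w y - w x) ^ 2)
    (α : ℝ) (hα : 0 ≤ α)
    (ω : Ω → ℝ) (hlip : ∀ x y, 0 < μ x y → |ω x - ω y| ≤ α * ρ x y)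
    (v : Ω → ℝ) :
    ∑ x, Real.exp (ω x) ^ 2 * (v x * ∑ y, μ x y * (v y - v x))
      ≤ (-lam1 + (Real.cosh (α * s) - 1) / s ^ 2) * ∑ x, m x * (Real.exp (ω x) * v x) ^ 2 := by
  classical
  set w : Ω → ℝ := fun x => Real.exp (ω x) * v x with hw
  set K : ℝ := (Real.cosh (α * s) - 1) / s ^ 2 with hK
  have hKnn : 0 ≤ K := by
    apply div_nonneg _ (by positivity)
    linarith [Real.one_le_cosh (α * s)]
  have hswap : ∀ F : Ω → Ω → ℝ,
      ∑ x, ∑ y, μ x y * F x y = ∑ x, ∑ y, μ x y * F y x := by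
    intro F
    rw [Finset.sum_comm]
    exact Finset.sum_congr rfl fun y _ => Finset.sum_congr rfl fun x _ => by rw [hsym]
  -- Step 1: rewrite LHS
  have step1 : ∑ x, Real.exp (ω x) ^ 2 * (v x * ∑ y, μ x y * (v y - v x))
      = (∑ x, ∑ y, μ x y * (w x * w y * Real.exp (ω x - ω y)))
        - ∑ x, ∑ y, μ x y * w x ^ 2 := by
    rw [← Finset.sum_sub_distrib]
    refine Finset.sum_congr rfl fun x _ => ?_
    rw [Finset.mul_sum, ← Finset.sum_sub_distrib, Finset.mul_sum]
    refine Finset.sum_congr rfl fun y _ => ?_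
    simp only [hw]
    rw [Real.exp_sub]
    have h1 : Real.exp (ω x) ≠ 0 := (Real.exp_pos _).ne'
    have h2 : Real.exp (ω y) ≠ 0 := (Real.exp_pos _).ne'
    field_simp
  -- Step 2: symmetrize to cosh
  have step2 : (∑ x, ∑ y, μ x y * (w x * w y * Real.exp (ω x - ω y)))
      = ∑ x, ∑ y, μ x y * (w x * w y * Real.cosh (ω x - ω y)) := by
    have hs2 := hswap (fun x y => w x * w y * Real.exp (ω x - ω y))
    have : ∀ x y, μ x y * (w x * w y * Real.cosh (ω x - ω y))
        = (μ x y * (w x * w y * Real.exp (ω x - ω y))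
          + μ x y * (w y * w x * Real.exp (ω y - ω x))) / 2 := by
      intro x y
      rw [Real.cosh_eq, show -(ω x - ω y) = ω y - ω x by ring]
      ring
    rw [show (∑ x, ∑ y, μ x y * (w x * w y * Real.cosh (ω x - ω y)))
        = ((∑ x, ∑ y, μ x y * (w x * w y * Real.exp (ω x - ω y)))
          + ∑ x, ∑ y, μ x y * (w y * w x * Real.exp (ω y - ω x))) / 2 by
      rw [← Finset.sum_add_distrib, Finset.sum_div]
      refine Finset.sum_congr rfl fun x _ => ?_
      rw [← Finset.sum_add_distrib, Finset.sum_div]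
      exact Finset.sum_congr rfl fun y _ => this x y]
    rw [← hs2]
    ring
  -- Step 3: quadratic form identity
  have h1 : ∑ x, ∑ y, μ x y * w y ^ 2 = ∑ x, ∑ y, μ x y * w x ^ 2 := by
    have := hswap (fun x y => w y ^ 2); simpa using this
  have h3 : ∑ x, ∑ y, μ x y * (w y - w x) ^ 2
      = (∑ x, ∑ y, μ x y * w y ^ 2) - 2 * (∑ x, ∑ y, μ x y * (w x * w y))
        + ∑ x, ∑ y, μ x y * w x ^ 2 := by
    simp only [Finset.mul_sum, ← Finset.sum_sub_distrib, ← Finset.sum_add_distrib]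
    exact Finset.sum_congr rfl fun x _ => Finset.sum_congr rfl fun y _ => by ring
  have step3 : (∑ x, ∑ y, μ x y * (w x * w y)) - (∑ x, ∑ y, μ x y * w x ^ 2)
      = -((1 / 2) * ∑ x, ∑ y, μ x y * (w y - w x) ^ 2) := by
    rw [h3, h1]; ring
  -- split cosh sum
  have split : ∑ x, ∑ y, μ x y * (w x * w y * Real.cosh (ω x - ω y))
      = (∑ x, ∑ y, μ x y * (w x * w y * (Real.cosh (ω x - ω y) - 1)))
        + ∑ x, ∑ y, μ x y * (w x * w y) := by
    simp only [← Finset.sum_add_distrib]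
    exact Finset.sum_congr rfl fun x _ => Finset.sum_congr rfl fun y _ => by ring
  -- bound the cosh term
  have hC1 : (∑ x, ∑ y, μ x y * (w x * w y * (Real.cosh (ω x - ω y) - 1)))
      ≤ ∑ x, ∑ y, μ x y * (ρ x y ^ 2 * (K * ((w x ^ 2 + w y ^ 2) / 2))) := by
    refine Finset.sum_le_sum fun x _ => Finset.sum_le_sum fun y _ => ?_
    rcases (hμ x y).eq_or_lt with h | h
    · rw [← h]; simp
    · refine mul_le_mul_of_nonneg_left ?_ (hμ x y)
      have hρs : ρ x y ≤ s := hjump x y h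
      have hd : |ω x - ω y| ≤ α * ρ x y := hlip x y h
      have hcosh : Real.cosh (ω x - ω y) - 1 ≤ ρ x y ^ 2 * K := by
        have c1 : Real.cosh (ω x - ω y) ≤ Real.cosh (α * ρ x y) := by
          rw [Real.cosh_le_cosh]
          rwa [abs_of_nonneg (mul_nonneg hα (hρnn x y))]
        have c2 := cosh_ratio_le α (ρ x y) s hα (hρnn x y) hρs hs
        have : ρ x y ^ 2 / s ^ 2 * (Real.cosh (α * s) - 1) = ρ x y ^ 2 * K := by
          rw [hK]; ring
        linarith
      have h0 : 0 ≤ Real.cosh (ω x - ω y) - 1 := by linarith [Real.one_le_cosh (ω x - ω y)]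
      have hB : w x * w y ≤ (w x ^ 2 + w y ^ 2) / 2 := by nlinarith [sq_nonneg (w x - w y)]
      have hBnn : 0 ≤ (w x ^ 2 + w y ^ 2) / 2 := by positivity
      calc w x * w y * (Real.cosh (ω x - ω y) - 1)
          ≤ (w x ^ 2 + w y ^ 2) / 2 * (Real.cosh (ω x - ω y) - 1) :=
            mul_le_mul_of_nonneg_right hB h0
        _ ≤ (w x ^ 2 + w y ^ 2) / 2 * (ρ x y ^ 2 * K) :=
            mul_le_mul_of_nonneg_left hcosh hBnn
        _ = ρ x y ^ 2 * (K * ((w x ^ 2 + w y ^ 2) / 2)) := by ring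
  have hA2 : ∑ x, ∑ y, μ x y * (ρ x y ^ 2 * w y ^ 2)
      = ∑ x, ∑ y, μ x y * (ρ x y ^ 2 * w x ^ 2) := by
    rw [hswap (fun x y => ρ x y ^ 2 * w y ^ 2)]
    exact Finset.sum_congr rfl fun x _ => Finset.sum_congr rfl fun y _ => by rw [hρsym]
  have e1 : ∑ x, ∑ y, μ x y * (ρ x y ^ 2 * (K * ((w x ^ 2 + w y ^ 2) / 2)))
      = K / 2 * (∑ x, ∑ y, μ x y * (ρ x y ^ 2 * w x ^ 2))
        + K / 2 * (∑ x, ∑ y, μ x y * (ρ x y ^ 2 * w y ^ 2)) := by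
    simp only [Finset.mul_sum, ← Finset.sum_add_distrib]
    exact Finset.sum_congr rfl fun x _ => Finset.sum_congr rfl fun y _ => by ring
  have e2 : ∑ x, ∑ y, μ x y * (ρ x y ^ 2 * (K * ((w x ^ 2 + w y ^ 2) / 2)))
      ≤ K * ∑ x, m x * w x ^ 2 := by
    rw [e1, hA2, show K / 2 * (∑ x, ∑ y, μ x y * (ρ x y ^ 2 * w x ^ 2))
        + K / 2 * (∑ x, ∑ y, μ x y * (ρ x y ^ 2 * w x ^ 2))
        = K * ∑ x, ∑ y, μ x y * (ρ x y ^ 2 * w x ^ 2) by ring]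
    refine mul_le_mul_of_nonneg_left (Finset.sum_le_sum fun x _ => ?_) hKnn
    have : ∑ y, μ x y * (ρ x y ^ 2 * w x ^ 2) = (∑ y, μ x y * ρ x y ^ 2) * w x ^ 2 := by
      rw [Finset.sum_mul]
      exact Finset.sum_congr rfl fun y _ => by ring
    rw [this]
    exact mul_le_mul_of_nonneg_right (hint x) (sq_nonneg _)
  have hQ := hlam1 w
  have hfin : ∑ x, m x * (Real.exp (ω x) * v x) ^ 2 = ∑ x, m x * w x ^ 2 := rfl
  rw [hfin]
  rw [step1, step2, split]
  linarith

lemma decay {Ω : Type*} [Fintype Ω]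
    (m : Ω → ℝ) (c : ℝ) (e : Ω → ℝ)
    (L : (Ω → ℝ) →L[ℝ] (Ω → ℝ))
    (hform : ∀ v : Ω → ℝ, ∑ x, m x * (e x ^ 2 * (v x * L v x))
      ≤ c * ∑ x, m x * (e x * v x) ^ 2)
    (f : Ω → ℝ) (t : ℝ) (ht : 0 ≤ t) :
    ∑ x, m x * (e x * (NormedSpace.exp (t • L)) f x) ^ 2
      ≤ Real.exp (2 * c * t) * ∑ x, m x * (e x * f x) ^ 2 := by
  classical
  set u : ℝ → Ω → ℝ := fun τ => (NormedSpace.exp (τ • L)) f with hu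
  have hder : ∀ (τ : ℝ) (x : Ω), HasDerivAt (fun σ => u σ x) (L (u τ) x) τ := by
    intro τ x
    have h1 := hasDerivAt_exp_smul_const' (𝕂 := ℝ) L τ
    let ψ : ((Ω → ℝ) →L[ℝ] (Ω → ℝ)) →L[ℝ] ℝ :=
      (ContinuousLinearMap.proj x).comp ((ContinuousLinearMap.apply ℝ (Ω → ℝ)) f)
    have h2 := ψ.hasFDerivAt.comp_hasDerivAt τ h1
    have h3 : ψ (L * NormedSpace.exp (τ • L)) = L (u τ) x := by
      simp [ψ, ContinuousLinearMap.mul_apply, hu]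
    rw [h3] at h2
    exact h2
  set F : ℝ → ℝ := fun τ => ∑ x, m x * (e x * u τ x) ^ 2 with hF
  set D : ℝ → ℝ := fun τ => ∑ x, m x * (2 * (e x * u τ x) ^ 1 * (e x * L (u τ) x)) with hD
  have hFder : ∀ τ, HasDerivAt F (D τ) τ := by
    intro τ
    apply HasDerivAt.fun_sum
    intro x _
    have hx : HasDerivAt (fun σ => e x * u σ x) (e x * L (u τ) x) τ :=
      (hder τ x).const_mul (e x)
    have hx2 := hx.pow 2
    have hx3 := hx2.const_mul (m x)
    simpa using hx3
  have hDle : ∀ τ, D τ ≤ 2 * c * F τ := by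
    intro τ
    have h1 : D τ = 2 * ∑ x, m x * (e x ^ 2 * (u τ x * L (u τ) x)) := by
      rw [hD, Finset.mul_sum]
      exact Finset.sum_congr rfl fun x _ => by ring
    have h2 := hform (u τ)
    rw [h1, hF]
    nlinarith
  set G : ℝ → ℝ := fun τ => F τ * Real.exp (-(2 * c) * τ) with hG
  have hGder : ∀ τ, HasDerivAt G
      (D τ * Real.exp (-(2 * c) * τ) + F τ * (Real.exp (-(2 * c) * τ) * (-(2 * c)))) τ := by
    intro τ
    have hexp : HasDerivAt (fun τ : ℝ => Real.exp (-(2 * c) * τ))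
        (Real.exp (-(2 * c) * τ) * (-(2 * c))) τ := by
      have h0 : HasDerivAt (fun τ : ℝ => -(2 * c) * τ) (-(2 * c)) τ := by
        simpa using (hasDerivAt_id τ).const_mul (-(2 * c))
      have := (Real.hasDerivAt_exp (-(2 * c) * τ)).comp τ h0
      simpa [Function.comp_def] using this
    exact (hFder τ).mul hexp
  have hGanti : AntitoneOn G (Set.Icc 0 t) := by
    apply antitoneOn_of_deriv_nonpos (convex_Icc 0 t)
    · exact fun τ _ => (hGder τ).differentiableAt.continuousAt.continuousWithinAt
    · exact fun τ _ => (hGder τ).differentiableAt.differentiableWithinAt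
    · intro τ _
      rw [(hGder τ).deriv]
      have h1 := hDle τ
      have h2 := Real.exp_pos (-(2 * c) * τ)
      nlinarith
  have hGt : G t ≤ G 0 := hGanti (Set.left_mem_Icc.2 ht) (Set.right_mem_Icc.2 ht) ht
  have hG0 : G 0 = ∑ x, m x * (e x * f x) ^ 2 := by
    simp [hG, hF, hu, NormedSpace.exp_zero]
  have hexppos := Real.exp_pos (-(2 * c) * t)
  have hFt : F t ≤ Real.exp (2 * c * t) * ∑ x, m x * (e x * f x) ^ 2 := by
    have h1 : F t * Real.exp (-(2 * c) * t) ≤ ∑ x, m x * (e x * f x) ^ 2 := by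
      rw [← hG0]; exact hGt
    have h2 : Real.exp (2 * c * t) * Real.exp (-(2 * c) * t) = 1 := by
      rw [← Real.exp_add]; norm_num
    have h3 := mul_le_mul_of_nonneg_left h1 (Real.exp_pos (2 * c * t)).le
    have h4 : Real.exp (2 * c * t) * (F t * Real.exp (-(2 * c) * t)) = F t := by
      rw [mul_comm (F t), ← mul_assoc, h2, one_mul]
    rw [h4] at h3
    exact h3
  exact hFt

theorem finite_graph_DGG {Ω : Type*} [Fintype Ω]
    (m : Ω → ℝ) (hm : ∀ x, 0 < m x)
    (μ : Ω → Ω → ℝ) (hμ : ∀ x y, 0 ≤ μ x y) (hsym : ∀ x y, μ x y = μ y x)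
    (ρ : Ω → Ω → ℝ) (hρ0 : ∀ x, ρ x x = 0) (hρsym : ∀ x y, ρ x y = ρ y x)
    (hρtri : ∀ x y z, ρ x z ≤ ρ x y + ρ y z) (hρnn : ∀ x y, 0 ≤ ρ x y)
    (hint : ∀ x, ∑ y, μ x y * ρ x y ^ 2 ≤ m x)
    (s : ℝ) (hs : 0 < s) (hjump : ∀ x y, 0 < μ x y → ρ x y ≤ s)
    (L : (Ω → ℝ) →L[ℝ] (Ω → ℝ))
    (hL : ∀ (f : Ω → ℝ) (x : Ω), L f x = (m x)⁻¹ * ∑ y, μ x y * (f y - f x))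
    (lam1 : ℝ)
    (hlam : lam1 = sInf {q : ℝ | ∃ g : Ω → ℝ, g ≠ 0 ∧
        q = ((1 / 2) * ∑ x, ∑ y, μ x y * (g y - g x) ^ 2) / (∑ x, m x * g x ^ 2)})
    (A B : Set Ω) (hA : A.Nonempty) (hB : B.Nonempty)
    (f g : Ω → ℝ) (hf : ∀ x, x ∉ A → f x = 0) (hg : ∀ x, x ∉ B → g x = 0)
    (t : ℝ) (ht : 0 < t) :
    |∑ x, m x * (NormedSpace.exp (t • L)) f x * g x|
      ≤ Real.exp (-lam1 * t - zeta s t (sInf {d : ℝ | ∃ a ∈ A, ∃ b ∈ B, d = ρ a b}))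
        * Real.sqrt (∑ x, m x * f x ^ 2) * Real.sqrt (∑ x, m x * g x ^ 2) := by
  classical
  obtain ⟨a0, ha0⟩ := hA
  obtain ⟨b0, hb0⟩ := hB
  -- distance between A and B
  set S : Set ℝ := {d : ℝ | ∃ a ∈ A, ∃ b ∈ B, d = ρ a b} with hS
  set r : ℝ := sInf S with hr
  have hSne : S.Nonempty := ⟨ρ a0 b0, a0, ha0, b0, hb0, rfl⟩
  have hSbdd : BddBelow S := ⟨0, fun d ⟨a, _, b, _, hd⟩ => hd ▸ hρnn a b⟩
  have hrnn : 0 ≤ r := le_csInf hSne fun d ⟨a, _, b, _, hd⟩ => hd ▸ hρnn a b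
  have hrle : ∀ a ∈ A, ∀ b ∈ B, r ≤ ρ a b := fun a ha b hb =>
    csInf_le hSbdd ⟨a, ha, b, hb, rfl⟩
  -- distance to A
  set dA : Ω → ℝ := fun x => sInf {d : ℝ | ∃ a ∈ A, d = ρ x a} with hdA
  have hdAne : ∀ x, {d : ℝ | ∃ a ∈ A, d = ρ x a}.Nonempty := fun x => ⟨ρ x a0, a0, ha0, rfl⟩
  have hdAbdd : ∀ x, BddBelow {d : ℝ | ∃ a ∈ A, d = ρ x a} := fun x =>
    ⟨0, fun d ⟨a, _, hd⟩ => hd ▸ hρnn x a⟩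
  have hdAle : ∀ x, ∀ a ∈ A, dA x ≤ ρ x a := fun x a ha =>
    csInf_le (hdAbdd x) ⟨a, ha, rfl⟩
  have hdAnn : ∀ x, 0 ≤ dA x := fun x =>
    le_csInf (hdAne x) fun d ⟨a, _, hd⟩ => hd ▸ hρnn x a
  have hdAzero : ∀ a ∈ A, dA a = 0 := fun a ha =>
    le_antisymm (by simpa [hρ0] using hdAle a a ha) (hdAnn a)
  have hdAkey : ∀ x y, dA x ≤ ρ x y + dA y := by
    intro x y
    rw [← sub_le_iff_le_add']
    apply le_csInf (hdAne y)
    rintro d ⟨a, ha, rfl⟩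
    have h1 := hρtri x y a
    have h2 := hdAle x a ha
    linarith
  have hdAlip : ∀ x y, |dA x - dA y| ≤ ρ x y := by
    intro x y
    rw [abs_sub_le_iff]
    exact ⟨by linarith [hdAkey x y], by linarith [hdAkey y x, hρsym x y]⟩
  have hdAB : ∀ b ∈ B, r ≤ dA b := by
    intro b hb
    apply le_csInf (hdAne b)
    rintro d ⟨a, ha, rfl⟩
    rw [hρsym]
    exact hrle a ha b hb
  -- the weight
  set α : ℝ := Real.arsinh (r * s / t) / s with hαdef
  have hα : 0 ≤ α := div_nonneg (Real.arsinh_nonneg_iff.2 (by positivity)) hs.le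
  set ω : Ω → ℝ := fun x => α * dA x with hω
  have hlip : ∀ x y, 0 < μ x y → |ω x - ω y| ≤ α * ρ x y := by
    intro x y _
    rw [hω]
    simp only
    rw [← mul_sub, abs_mul, abs_of_nonneg hα]
    exact mul_le_mul_of_nonneg_left (hdAlip x y) hα
  -- spectral bound
  have hlam1 : ∀ w : Ω → ℝ, lam1 * ∑ x, m x * w x ^ 2
      ≤ (1 / 2) * ∑ x, ∑ y, μ x y * (w y - w x) ^ 2 := by
    intro w
    have hQnn : 0 ≤ (1 / 2) * ∑ x, ∑ y, μ x y * (w y - w x) ^ 2 := by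
      apply mul_nonneg (by norm_num)
      exact Finset.sum_nonneg fun x _ => Finset.sum_nonneg fun y _ =>
        mul_nonneg (hμ x y) (sq_nonneg _)
    by_cases hw0 : w = 0
    · simp [hw0]
    · have hD : 0 < ∑ x, m x * w x ^ 2 := by
        obtain ⟨x0, hx0⟩ := Function.ne_iff.1 hw0
        apply Finset.sum_pos' (fun x _ => mul_nonneg (hm x).le (sq_nonneg _))
        refine ⟨x0, Finset.mem_univ x0, mul_pos (hm x0) ?_⟩
        exact lt_of_le_of_ne (sq_nonneg _) (Ne.symm (pow_ne_zero 2 hx0))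
      have hbdd : BddBelow {q : ℝ | ∃ g : Ω → ℝ, g ≠ 0 ∧
          q = ((1 / 2) * ∑ x, ∑ y, μ x y * (g y - g x) ^ 2) / (∑ x, m x * g x ^ 2)} := by
        refine ⟨0, fun q ⟨g', _, hq⟩ => ?_⟩
        rw [hq]
        apply div_nonneg _ (Finset.sum_nonneg fun x _ => mul_nonneg (hm x).le (sq_nonneg _))
        apply mul_nonneg (by norm_num)
        exact Finset.sum_nonneg fun x _ => Finset.sum_nonneg fun y _ =>
          mul_nonneg (hμ x y) (sq_nonneg _)
      have hmem : ((1 / 2) * ∑ x, ∑ y, μ x y * (w y - w x) ^ 2) / (∑ x, m x * w x ^ 2)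
          ∈ {q : ℝ | ∃ g : Ω → ℝ, g ≠ 0 ∧
          q = ((1 / 2) * ∑ x, ∑ y, μ x y * (g y - g x) ^ 2) / (∑ x, m x * g x ^ 2)} :=
        ⟨w, hw0, rfl⟩
      have hle : lam1 ≤ ((1 / 2) * ∑ x, ∑ y, μ x y * (w y - w x) ^ 2)
          / (∑ x, m x * w x ^ 2) := hlam ▸ csInf_le hbdd hmem
      exact (le_div_iff₀ hD).1 hle
  -- constant
  set c : ℝ := -lam1 + (Real.cosh (α * s) - 1) / s ^ 2 with hc
  -- form bound bridge
  have hform : ∀ v : Ω → ℝ, ∑ x, m x * (Real.exp (ω x) ^ 2 * (v x * L v x))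
      ≤ c * ∑ x, m x * (Real.exp (ω x) * v x) ^ 2 := by
    intro v
    have hb : ∀ x, m x * (Real.exp (ω x) ^ 2 * (v x * L v x))
        = Real.exp (ω x) ^ 2 * (v x * ∑ y, μ x y * (v y - v x)) := by
      intro x
      rw [hL]
      field_simp [(hm x).ne']
    rw [Finset.sum_congr rfl fun x _ => hb x]
    exact form_bound m μ hμ hsym ρ hρsym hρnn hint s hs hjump lam1 hlam1 α hα ω hlip v
  -- decay
  set u : Ω → ℝ := (NormedSpace.exp (t • L)) f with hudef
  have hdecay := decay m c (fun x => Real.exp (ω x)) L hform f t ht.le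
  -- supports
  set P : ℝ := ∑ x, m x * f x ^ 2 with hP
  set Q : ℝ := ∑ x, m x * g x ^ 2 with hQ
  have hPnn : 0 ≤ P := Finset.sum_nonneg fun x _ => mul_nonneg (hm x).le (sq_nonneg _)
  have hQnn : 0 ≤ Q := Finset.sum_nonneg fun x _ => mul_nonneg (hm x).le (sq_nonneg _)
  have hfA : ∑ x, m x * (Real.exp (ω x) * f x) ^ 2 = P := by
    refine Finset.sum_congr rfl fun x _ => ?_
    by_cases hxA : x ∈ A
    · rw [hω]
      simp [hdAzero x hxA]
    · rw [hf x hxA]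
      ring
  have hS1 : ∑ x, m x * (Real.exp (ω x) * u x) ^ 2 ≤ Real.exp (2 * c * t) * P := by
    rw [← hfA]
    exact hdecay
  have hgB : ∑ x, m x * (Real.exp (-ω x) * g x) ^ 2 ≤ Real.exp (-(2 * (α * r))) * Q := by
    rw [hQ, Finset.mul_sum]
    refine Finset.sum_le_sum fun x _ => ?_
    by_cases hxB : x ∈ B
    · have h1 : α * r ≤ ω x := by
        rw [hω]
        exact mul_le_mul_of_nonneg_left (hdAB x hxB) hα
      have h2 : Real.exp (-ω x) ^ 2 ≤ Real.exp (-(2 * (α * r))) := by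
        rw [← Real.exp_nat_mul]
        apply Real.exp_le_exp.2
        push_cast
        linarith
      calc m x * (Real.exp (-ω x) * g x) ^ 2
          = Real.exp (-ω x) ^ 2 * (m x * g x ^ 2) := by ring
        _ ≤ Real.exp (-(2 * (α * r))) * (m x * g x ^ 2) :=
            mul_le_mul_of_nonneg_right h2 (mul_nonneg (hm x).le (sq_nonneg _))
    · rw [hg x hxB]
      simp
  -- Cauchy–Schwarz
  set X : ℝ := ∑ x, m x * u x * g x with hX
  have hCS : X ^ 2 ≤ (∑ x, m x * (Real.exp (ω x) * u x) ^ 2)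
      * ∑ x, m x * (Real.exp (-ω x) * g x) ^ 2 := by
    have hXeq : X = ∑ x, (Real.sqrt (m x) * (Real.exp (ω x) * u x))
        * (Real.sqrt (m x) * (Real.exp (-ω x) * g x)) := by
      refine Finset.sum_congr rfl fun x _ => ?_
      have h1 : Real.sqrt (m x) * Real.sqrt (m x) = m x := Real.mul_self_sqrt (hm x).le
      have h2 : Real.exp (ω x) * Real.exp (-ω x) = 1 := by
        rw [← Real.exp_add]; simp
      calc m x * u x * g x
          = (Real.sqrt (m x) * Real.sqrt (m x)) * ((Real.exp (ω x) * Real.exp (-ω x))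
            * (u x * g x)) := by rw [h1, h2]; ring
        _ = (Real.sqrt (m x) * (Real.exp (ω x) * u x))
            * (Real.sqrt (m x) * (Real.exp (-ω x) * g x)) := by ring
    rw [hXeq]
    have := Finset.sum_mul_sq_le_sq_mul_sq Finset.univ
      (fun x => Real.sqrt (m x) * (Real.exp (ω x) * u x))
      (fun x => Real.sqrt (m x) * (Real.exp (-ω x) * g x))
    refine le_trans this (le_of_eq ?_)
    congr 1
    · refine Finset.sum_congr rfl fun x _ => ?_
      rw [mul_pow, Real.sq_sqrt (hm x).le]
    · refine Finset.sum_congr rfl fun x _ => ?_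
      rw [mul_pow, Real.sq_sqrt (hm x).le]
  have hS2nn : 0 ≤ ∑ x, m x * (Real.exp (-ω x) * g x) ^ 2 :=
    Finset.sum_nonneg fun x _ => mul_nonneg (hm x).le (sq_nonneg _)
  have hX2 : X ^ 2 ≤ (Real.exp (2 * c * t) * P) * (Real.exp (-(2 * (α * r))) * Q) :=
    le_trans hCS (mul_le_mul hS1 hgB hS2nn (by positivity))
  -- convert to square of the final bound
  have hsq : (Real.exp (2 * c * t) * P) * (Real.exp (-(2 * (α * r))) * Q)
      = (Real.exp (c * t - α * r) * Real.sqrt P * Real.sqrt Q) ^ 2 := by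
    rw [mul_pow, mul_pow, Real.sq_sqrt hPnn, Real.sq_sqrt hQnn,
      show Real.exp (c * t - α * r) ^ 2 = Real.exp (c * t - α * r)
        * Real.exp (c * t - α * r) from sq (Real.exp _),
      ← Real.exp_add, show Real.exp (2 * c * t) * P * (Real.exp (-(2 * (α * r))) * Q)
        = Real.exp (2 * c * t) * Real.exp (-(2 * (α * r))) * P * Q by ring,
      ← Real.exp_add]
    ring_nf
  have habs : |X| ≤ Real.exp (c * t - α * r) * Real.sqrt P * Real.sqrt Q := by
    have h1 : |X| = Real.sqrt (X ^ 2) := (Real.sqrt_sq_eq_abs X).symm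
    rw [h1]
    refine le_trans (Real.sqrt_le_sqrt (le_trans hX2 (le_of_eq hsq))) ?_
    rw [Real.sqrt_sq (by positivity)]
  -- exponent identity
  have hzeta : c * t - α * r = -lam1 * t - zeta s t r := by
    have hαs : α * s = Real.arsinh (r * s / t) := div_mul_cancel₀ _ hs.ne'
    have hcosh : Real.cosh (α * s) = Real.sqrt (1 + (r * s / t) ^ 2) := by
      rw [hαs, Real.cosh_arsinh]
    have hsqrt : Real.sqrt (t ^ 2 + r ^ 2 * s ^ 2) = t * Real.sqrt (1 + (r * s / t) ^ 2) := by
      rw [show t ^ 2 + r ^ 2 * s ^ 2 = t ^ 2 * (1 + (r * s / t) ^ 2) by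
        field_simp]
      rw [Real.sqrt_mul (sq_nonneg t), Real.sqrt_sq ht.le]
    rw [hc, zeta, hcosh, hsqrt, hαdef]
    field_simp
    ring
  rw [hzeta] at habs
  exact habs
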